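/- Every permutation σ of {1,...,n} has at most 3 descent 'runs' if it is a product of two unimodal permutations; more precisely, if σ = τ·ρ with τ, ρ unimodal, then the descent composition of σ is of the form (n-r, 1^r) or (n-r-s-t, 1^t, s, 1^r). -/
import Mathlib


/-- A permutation of `Fin n` is unimodal if it strictly increases up to some
position `m` and strictly decreases afterwards. -/
def Unimodal {n : ℕ} (σ : Equiv.Perm (Fin n)) : Prop :=
  ∃ m : Fin n, StrictMonoOn σ {i | i ≤ m} ∧ StrictAntiOn σ {i | m ≤ i}

/-- The descent set: positions `i` (0-indexed, with `i+1 < n`) with `σ i > σ (i+1)`. -/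
def descents {n : ℕ} (σ : Equiv.Perm (Fin n)) : Finset (Fin n) :=
  Finset.univ.filter (fun i => ∃ j : Fin n, (j : ℕ) = (i : ℕ) + 1 ∧ σ j < σ i)

/-- The number of descents. -/
def desNum {n : ℕ} (σ : Equiv.Perm (Fin n)) : ℕ := (descents σ).card

/-- Descent at natural-number position `i`. -/
def desAt {n : ℕ} (σ : Equiv.Perm (Fin n)) (i : ℕ) : Prop :=
  ∃ h : i + 1 < n, σ ⟨i + 1, h⟩ < σ ⟨i, Nat.lt_of_succ_lt h⟩

lemma mem_descents_iff {n : ℕ} (σ : Equiv.Perm (Fin n)) (i : Fin n) :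
    i ∈ descents σ ↔ desAt σ (i : ℕ) := by
  simp only [descents, Finset.mem_filter, Finset.mem_univ, true_and, desAt]
  constructor
  · rintro ⟨j, hj, hlt⟩
    have h1 : (i : ℕ) + 1 < n := hj ▸ j.isLt
    refine ⟨h1, ?_⟩
    have e1 : (⟨(i : ℕ) + 1, h1⟩ : Fin n) = j := Fin.ext hj.symm
    have e2 : (⟨(i : ℕ), Nat.lt_of_succ_lt h1⟩ : Fin n) = i := Fin.ext rfl
    rw [e1, e2]; exact hlt
  · rintro ⟨h1, hlt⟩
    refine ⟨⟨(i : ℕ) + 1, h1⟩, rfl, ?_⟩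
    have e2 : (⟨(i : ℕ), Nat.lt_of_succ_lt h1⟩ : Fin n) = i := Fin.ext rfl
    rw [e2] at hlt; exact hlt

lemma uni_step1 {n : ℕ} {τ : Equiv.Perm (Fin n)} (h : Unimodal τ) {x y z : Fin n}
    (hxy : x < y) (hyz : y < z) (hd : τ y < τ x) : τ z < τ y := by
  obtain ⟨q, hmono, hanti⟩ := h
  by_cases hy : y ≤ q
  · exact absurd (hmono (show x ∈ {i | i ≤ q} from le_of_lt (lt_of_lt_of_le hxy hy)) hy hxy)
      (not_lt.2 hd.le)
  · push_neg at hy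
    exact hanti (show y ∈ {i | q ≤ i} from hy.le) (show z ∈ {i | q ≤ i} from hy.le.trans hyz.le) hyz

lemma uni_step2 {n : ℕ} {τ : Equiv.Perm (Fin n)} (h : Unimodal τ) {x y z : Fin n}
    (hxy : x < y) (hyz : y < z) (hd : τ y < τ z) : τ x < τ y := by
  obtain ⟨q, hmono, hanti⟩ := h
  by_cases hy : q ≤ y
  · exact absurd (hanti hy (show z ∈ {i | q ≤ i} from hy.trans hyz.le) hyz) (not_lt.2 hd.le)
  · push_neg at hy
    exact hmono (show x ∈ {i | i ≤ q} from (hxy.trans hy).le) (show y ∈ {i | i ≤ q} from hy.le) hxy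

/-- If `σ = τ * ρ` with `τ, ρ` unimodal, then the descent set of `σ` is a union
of at most two intervals `[a,b) ∪ [c, n-1)`, the second one ending at the last
position; i.e. the descent composition of `σ` is of the form `(n-r, 1^r)` or
`(n-r-s-t, 1^t, s, 1^r)`. -/
theorem descents_of_prod_unimodal (n : ℕ) (σ τ ρ : Equiv.Perm (Fin n))
    (hτ : Unimodal τ) (hρ : Unimodal ρ) (hσ : σ = τ * ρ) :
    ∃ a b c : ℕ, a ≤ b ∧ b ≤ c ∧
      ∀ i : Fin n, i ∈ descents σ ↔
        ((a ≤ (i : ℕ) ∧ (i : ℕ) < b) ∨ (c ≤ (i : ℕ) ∧ (i : ℕ) + 1 < n)) := by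
  obtain ⟨m, hmono, hanti⟩ := hρ
  set p : ℕ := (m : ℕ) with hp
  have hpn : p < n := m.isLt
  have hσapp : ∀ x : Fin n, σ x = τ (ρ x) := by intro x; rw [hσ]; rfl
  -- ρ increasing on positions ≤ p, decreasing on positions ≥ p
  have hρmono : ∀ (i j : Fin n), (i : ℕ) ≤ p → (j : ℕ) ≤ p → i < j → ρ i < ρ j := by
    intro i j hi hj hij
    exact hmono (show (i : ℕ) ≤ (m : ℕ) from hi) (show (j : ℕ) ≤ (m : ℕ) from hj) hij
  have hρanti : ∀ (i j : Fin n), p ≤ (i : ℕ) → p ≤ (j : ℕ) → i < j → ρ j < ρ i := by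
    intro i j hi hj hij
    exact hanti (show (m : ℕ) ≤ (i : ℕ) from hi) (show (m : ℕ) ≤ (j : ℕ) from hj) hij
  -- step lemmas
  have hstep1 : ∀ i : ℕ, i + 1 < p → desAt σ i → desAt σ (i + 1) := by
    rintro i hip ⟨h1, hd⟩
    have h2 : i + 1 + 1 < n := Nat.lt_of_le_of_lt hip hpn
    refine ⟨h2, ?_⟩
    set x : Fin n := ⟨i, Nat.lt_of_succ_lt h1⟩
    set y : Fin n := ⟨i + 1, h1⟩
    set z : Fin n := ⟨i + 2, h2⟩
    have hxy : ρ x < ρ y := hρmono x y (show i ≤ p by omega) (show i + 1 ≤ p by omega)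
      (Fin.mk_lt_mk.mpr (by omega))
    have hyz : ρ y < ρ z := hρmono y z (show i + 1 ≤ p by omega) (show i + 2 ≤ p by omega)
      (Fin.mk_lt_mk.mpr (by omega))
    rw [hσapp, hσapp] at hd ⊢
    exact uni_step1 hτ hxy hyz hd
  have hstep2 : ∀ i : ℕ, p ≤ i → i + 2 < n → desAt σ i → desAt σ (i + 1) := by
    rintro i hpi h2 ⟨h1, hd⟩
    refine ⟨h2, ?_⟩
    set x : Fin n := ⟨i, Nat.lt_of_succ_lt h1⟩
    set y : Fin n := ⟨i + 1, h1⟩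
    set z : Fin n := ⟨i + 2, h2⟩
    have hyx : ρ y < ρ x := hρanti x y (show p ≤ i by omega) (show p ≤ i + 1 by omega)
      (Fin.mk_lt_mk.mpr (by omega))
    have hzy : ρ z < ρ y := hρanti y z (show p ≤ i + 1 by omega) (show p ≤ i + 2 by omega)
      (Fin.mk_lt_mk.mpr (by omega))
    rw [hσapp, hσapp] at hd ⊢
    exact uni_step2 hτ hzy hyx hd
  -- define a and c
  set A : Set ℕ := {i | i = p ∨ (i < p ∧ desAt σ i)} with hA
  set C : Set ℕ := {i | i = n ∨ (p ≤ i ∧ i + 1 < n ∧ desAt σ i)} with hC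
  have hAne : A.Nonempty := ⟨p, Or.inl rfl⟩
  have hCne : C.Nonempty := ⟨n, Or.inl rfl⟩
  set a := sInf A with ha
  set c := sInf C with hc
  have hap : a ≤ p := Nat.sInf_le (Or.inl rfl)
  have hpc : p ≤ c := by
    have : ∀ x ∈ C, p ≤ x := by rintro x (rfl | ⟨h, _⟩); exacts [hpn.le, h]
    exact this _ (Nat.sInf_mem hCne)
  -- claim 1: for i < p, desAt σ i ↔ a ≤ i
  have claim1 : ∀ i : ℕ, i < p → (desAt σ i ↔ a ≤ i) := by
    intro i hip
    constructor
    · intro hd; exact Nat.sInf_le (Or.inr ⟨hip, hd⟩)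
    · intro hai
      have hmem := Nat.sInf_mem hAne
      rw [← ha] at hmem
      rcases hmem with h' | ⟨hap', hda⟩
      · omega
      · -- induct from a up to i
        have key : ∀ k, a ≤ k → k < p → desAt σ k := by
          intro k hk
          induction k, hk using Nat.le_induction with
          | base => intro _; exact hda
          | succ k hk ih => intro hkp; exact hstep1 k hkp (ih (by omega))
        exact key i hai hip
  -- claim 2: for p ≤ i with i+1 < n, desAt σ i ↔ c ≤ i
  have claim2 : ∀ i : ℕ, p ≤ i → i + 1 < n → (desAt σ i ↔ c ≤ i) := by
    intro i hpi hin
    constructor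
    · intro hd; exact Nat.sInf_le (Or.inr ⟨hpi, hin, hd⟩)
    · intro hci
      have hmem := Nat.sInf_mem hCne
      rw [← hc] at hmem
      rcases hmem with h' | ⟨hpc', hcn, hdc⟩
      · omega
      · have key : ∀ k, c ≤ k → k + 1 < n → desAt σ k := by
          intro k hk
          induction k, hk using Nat.le_induction with
          | base => intro _; exact hdc
          | succ k hk ih => intro hkn; exact hstep2 k (hpc'.trans hk) hkn (ih (by omega))
        exact key i hci hin
  refine ⟨a, p, c, hap, hpc, ?_⟩
  intro i
  rw [mem_descents_iff]
  by_cases hip : (i : ℕ) < p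
  · rw [claim1 _ hip]
    constructor
    · intro h; exact Or.inl ⟨h, hip⟩
    · rintro (⟨h, _⟩ | ⟨h, _⟩); exacts [h, by omega]
  · push_neg at hip
    by_cases hin : (i : ℕ) + 1 < n
    · rw [claim2 _ hip hin]
      constructor
      · intro h; exact Or.inr ⟨h, hin⟩
      · rintro (⟨_, h⟩ | ⟨h, _⟩); exacts [by omega, h]
    · constructor
      · rintro ⟨h, _⟩; omega
      · rintro (⟨_, h⟩ | ⟨_, h⟩) <;> omega
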